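/- Let H be a fixed symmetric positive definite n×n real matrix and θ* ∈ ℝ^n. Suppose α_R, α_D : ℝ^n → ℝ are continuous at θ* with α_R(θ*) > 0 and α_D(θ*) > 0, and E_R, E_D : ℝ^n → ℝ^{n×n} satisfy ‖E_R(θ)‖ → 0 and ‖E_D(θ)‖ → 0 as θ → θ*. Define the preconditioned component updates p_R(θ) = −H⁻¹(α_R(θ)·H + E_R(θ))(θ − θ*) and p_D(θ) = −H⁻¹(α_D(θ)·H + E_D(θ))(θ − θ*). Then along any sequence θ_k → θ* with θ_k ≠ θ* (and p_R(θ_k), p_D(θ_k) eventually nonzero), the cosine score satisfies S(p_R(θ_k), p_D(θ_k)) → 1. -/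

import Mathlib

open scoped RealInnerProductSpace Topology
open Filter

/-- Auxiliary: `Matrix.toEuclideanCLM` as an `ℝ`-linear map, to get continuity. -/
noncomputable def newtonAux.clmOf {n : ℕ} : Matrix (Fin n) (Fin n) ℝ →ₗ[ℝ]
    (EuclideanSpace ℝ (Fin n) →L[ℝ] EuclideanSpace ℝ (Fin n)) where
  toFun M := Matrix.toEuclideanCLM (𝕜 := ℝ) M
  map_add' a b := map_add _ a b
  map_smul' c a := by
    ext1 x
    simp [Matrix.smul_mulVec]

/-- **Newton preconditioning aligns component steps near the optimum.** Let `H` be a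
fixed symmetric positive definite matrix, `α_R, α_D` continuous at `θ*` with positive
values there, and `E_R, E_D` matrix-valued error terms vanishing at `θ*`. With the
preconditioned component updates `p_R(θ) = −H⁻¹(α_R(θ)H + E_R(θ))(θ − θ*)` and
`p_D(θ) = −H⁻¹(α_D(θ)H + E_D(θ))(θ − θ*)`, along any sequence `θ_k → θ*` with
`θ_k ≠ θ*` (and the two updates eventually nonzero), the cosine score
`S(p_R(θ_k), p_D(θ_k))` converges to `1`. -/
theorem newton_aligns_component_steps
    {n : ℕ} (H : Matrix (Fin n) (Fin n) ℝ) (hH : H.PosDef)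
    (θstar : EuclideanSpace ℝ (Fin n))
    (αR αD : EuclideanSpace ℝ (Fin n) → ℝ)
    (hαRcont : ContinuousAt αR θstar) (hαDcont : ContinuousAt αD θstar)
    (hαRpos : 0 < αR θstar) (hαDpos : 0 < αD θstar)
    (ER ED : EuclideanSpace ℝ (Fin n) → Matrix (Fin n) (Fin n) ℝ)
    (hER : Tendsto ER (𝓝 θstar) (𝓝 0)) (hED : Tendsto ED (𝓝 θstar) (𝓝 0))
    (pR pD : EuclideanSpace ℝ (Fin n) → EuclideanSpace ℝ (Fin n))
    (hpR : ∀ θ, pR θ =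
      -(Matrix.toEuclideanLin (H⁻¹ * (αR θ • H + ER θ)) (θ - θstar)))
    (hpD : ∀ θ, pD θ =
      -(Matrix.toEuclideanLin (H⁻¹ * (αD θ • H + ED θ)) (θ - θstar)))
    (θ : ℕ → EuclideanSpace ℝ (Fin n))
    (hne : ∀ k, θ k ≠ θstar)
    (hθ : Tendsto θ atTop (𝓝 θstar))
    (hpRne : ∀ᶠ k in atTop, pR (θ k) ≠ 0)
    (hpDne : ∀ᶠ k in atTop, pD (θ k) ≠ 0) :
    Tendsto (fun k => ⟪pR (θ k), pD (θ k)⟫ / (‖pR (θ k)‖ * ‖pD (θ k)‖))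
      atTop (𝓝 1) := by
  classical
  set u : ℕ → EuclideanSpace ℝ (Fin n) := fun k => θ k - θstar with hu
  have hr : ∀ k, (0:ℝ) < ‖u k‖ := fun k =>
    norm_pos_iff.mpr (sub_ne_zero.mpr (hne k))
  have hHinv : H⁻¹ * H = 1 :=
    Matrix.nonsing_inv_mul H (isUnit_iff_ne_zero.mpr hH.det_pos.ne')
  -- decomposition of the updates
  have decomp : ∀ (α : EuclideanSpace ℝ (Fin n) → ℝ)
      (E : EuclideanSpace ℝ (Fin n) → Matrix (Fin n) (Fin n) ℝ)
      (θ' : EuclideanSpace ℝ (Fin n)),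
      Matrix.toEuclideanLin (H⁻¹ * (α θ' • H + E θ')) (θ' - θstar)
        = α θ' • (θ' - θstar) + Matrix.toEuclideanLin (H⁻¹ * E θ') (θ' - θstar) := by
    intro α E θ'
    have hm : H⁻¹ * (α θ' • H + E θ')
        = α θ' • (1 : Matrix (Fin n) (Fin n) ℝ) + H⁻¹ * E θ' := by
      rw [mul_add, Matrix.mul_smul, hHinv]
    rw [hm, map_add, map_smul, LinearMap.add_apply, LinearMap.smul_apply]
    congr 1
    rw [Matrix.toEuclideanLin_apply]
    simp
  set wR : ℕ → EuclideanSpace ℝ (Fin n) :=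
    fun k => Matrix.toEuclideanLin (H⁻¹ * ER (θ k)) (u k) with hwR
  set wD : ℕ → EuclideanSpace ℝ (Fin n) :=
    fun k => Matrix.toEuclideanLin (H⁻¹ * ED (θ k)) (u k) with hwD
  set bR : ℕ → ℝ := fun k => αR (θ k) with hbRdef
  set bD : ℕ → ℝ := fun k => αD (θ k) with hbDdef
  have hpRk : ∀ k, pR (θ k) = -(bR k • u k + wR k) := fun k => by
    rw [hpR, decomp]
  have hpDk : ∀ k, pD (θ k) = -(bD k • u k + wD k) := fun k => by
    rw [hpD, decomp]
  -- operator norm bounds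
  set cR : ℕ → ℝ := fun k => ‖Matrix.toEuclideanCLM (𝕜 := ℝ) (H⁻¹ * ER (θ k))‖ with hcRdef
  set cD : ℕ → ℝ := fun k => ‖Matrix.toEuclideanCLM (𝕜 := ℝ) (H⁻¹ * ED (θ k))‖ with hcDdef
  have hbound : ∀ (M : Matrix (Fin n) (Fin n) ℝ) (x : EuclideanSpace ℝ (Fin n)),
      ‖Matrix.toEuclideanLin M x‖ ≤ ‖Matrix.toEuclideanCLM (𝕜 := ℝ) M‖ * ‖x‖ := by
    intro M x
    rw [← Matrix.coe_toEuclideanCLM_eq_toEuclideanLin]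
    exact (Matrix.toEuclideanCLM (𝕜 := ℝ) M).le_opNorm x
  have hwRb : ∀ k, ‖wR k‖ ≤ cR k * ‖u k‖ := fun k => hbound _ _
  have hwDb : ∀ k, ‖wD k‖ ≤ cD k * ‖u k‖ := fun k => hbound _ _
  have hcRnn : ∀ k, 0 ≤ cR k := fun k => norm_nonneg _
  have hcDnn : ∀ k, 0 ≤ cD k := fun k => norm_nonneg _
  -- cR, cD tend to 0
  have hclmcont : Continuous
      (fun M : Matrix (Fin n) (Fin n) ℝ => ‖Matrix.toEuclideanCLM (𝕜 := ℝ) M‖) :=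
    continuous_norm.comp (newtonAux.clmOf (n := n)).continuous_of_finiteDimensional
  have hcR0 : Tendsto cR atTop (𝓝 0) := by
    have h0 : Tendsto (fun k => H⁻¹ * ER (θ k)) atTop (𝓝 (H⁻¹ * 0)) :=
      (hER.comp hθ).const_mul H⁻¹
    rw [mul_zero] at h0
    have h1 := (hclmcont.tendsto 0).comp h0
    have h00 : ‖Matrix.toEuclideanCLM (𝕜 := ℝ) (0 : Matrix (Fin n) (Fin n) ℝ)‖ = 0 := by
      rw [map_zero, norm_zero]
    rw [Function.comp_def, h00] at h1
    exact h1
  have hcD0 : Tendsto cD atTop (𝓝 0) := by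
    have h0 : Tendsto (fun k => H⁻¹ * ED (θ k)) atTop (𝓝 (H⁻¹ * 0)) :=
      (hED.comp hθ).const_mul H⁻¹
    rw [mul_zero] at h0
    have h1 := (hclmcont.tendsto 0).comp h0
    have h00 : ‖Matrix.toEuclideanCLM (𝕜 := ℝ) (0 : Matrix (Fin n) (Fin n) ℝ)‖ = 0 := by
      rw [map_zero, norm_zero]
    rw [Function.comp_def, h00] at h1
    exact h1
  have hbRlim : Tendsto bR atTop (𝓝 (αR θstar)) := hαRcont.tendsto.comp hθ
  have hbDlim : Tendsto bD atTop (𝓝 (αD θstar)) := hαDcont.tendsto.comp hθ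
  -- norm ratios
  set fR : ℕ → ℝ := fun k => ‖pR (θ k)‖ / ‖u k‖ with hfRdef
  set fD : ℕ → ℝ := fun k => ‖pD (θ k)‖ / ‖u k‖ with hfDdef
  have hnormratio : ∀ (b : ℝ) (w : EuclideanSpace ℝ (Fin n)) (k : ℕ) (c : ℝ),
      ‖w‖ ≤ c * ‖u k‖ →
      |(‖-(b • u k + w)‖ / ‖u k‖ - |b|)| ≤ c := by
    intro b w k c hw
    have hrk := hr k
    have h1 : |‖b • u k + w‖ - ‖b • u k‖| ≤ ‖w‖ := by
      have := abs_norm_sub_norm_le (b • u k + w) (b • u k)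
      simpa using this
    have h2 : ‖b • u k‖ = |b| * ‖u k‖ := by
      rw [norm_smul, Real.norm_eq_abs]
    rw [norm_neg]
    have h3 : ‖b • u k + w‖ / ‖u k‖ - |b|
        = (‖b • u k + w‖ - ‖b • u k‖) / ‖u k‖ := by
      rw [h2, sub_div, mul_div_assoc, div_self hrk.ne', mul_one]
    rw [h3, abs_div, abs_of_pos hrk, div_le_iff₀ hrk]
    exact h1.trans hw
  have hfR : Tendsto fR atTop (𝓝 (αR θstar)) := by
    have hz : Tendsto (fun k => fR k - |bR k|) atTop (𝓝 0) := by
      apply squeeze_zero_norm (a := cR) _ hcR0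
      intro k
      rw [Real.norm_eq_abs]
      have := hnormratio (bR k) (wR k) k (cR k) (hwRb k)
      simpa [hfRdef, hpRk k] using this
    have habs : Tendsto (fun k => |bR k|) atTop (𝓝 |αR θstar|) := hbRlim.abs
    have := hz.add habs
    rw [zero_add] at this
    simpa [abs_of_pos hαRpos] using this
  have hfD : Tendsto fD atTop (𝓝 (αD θstar)) := by
    have hz : Tendsto (fun k => fD k - |bD k|) atTop (𝓝 0) := by
      apply squeeze_zero_norm (a := cD) _ hcD0
      intro k
      rw [Real.norm_eq_abs]
      have := hnormratio (bD k) (wD k) k (cD k) (hwDb k)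
      simpa [hfDdef, hpDk k] using this
    have habs : Tendsto (fun k => |bD k|) atTop (𝓝 |αD θstar|) := hbDlim.abs
    have := hz.add habs
    rw [zero_add] at this
    simpa [abs_of_pos hαDpos] using this
  -- inner product ratio
  set g : ℕ → ℝ := fun k => ⟪pR (θ k), pD (θ k)⟫ / ‖u k‖ ^ 2 with hgdef
  have hinner : ∀ k, ⟪pR (θ k), pD (θ k)⟫
      = bR k * bD k * ‖u k‖ ^ 2
        + (bR k * ⟪u k, wD k⟫ + bD k * ⟪wR k, u k⟫ + ⟪wR k, wD k⟫) := by
    intro k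
    rw [hpRk k, hpDk k, inner_neg_neg]
    rw [inner_add_left, inner_add_right, inner_add_right,
      real_inner_smul_left, real_inner_smul_left, real_inner_smul_right,
      real_inner_smul_right, real_inner_self_eq_norm_sq]
    ring
  have hg : Tendsto g atTop (𝓝 (αR θstar * αD θstar)) := by
    have hz : Tendsto (fun k => g k - bR k * bD k) atTop (𝓝 0) := by
      apply squeeze_zero_norm
        (a := fun k => |bR k| * cD k + |bD k| * cR k + cR k * cD k)
      · intro k
        have hrk := hr k
        have hr2 : (0:ℝ) < ‖u k‖ ^ 2 := by positivity
        have hdiff : g k - bR k * bD k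
            = (bR k * ⟪u k, wD k⟫ + bD k * ⟪wR k, u k⟫ + ⟪wR k, wD k⟫) / ‖u k‖ ^ 2 := by
          rw [hgdef]
          simp only
          rw [hinner k]
          field_simp
          ring
        rw [Real.norm_eq_abs, hdiff, abs_div, abs_of_pos hr2, div_le_iff₀ hr2]
        have h1 : |⟪u k, wD k⟫| ≤ ‖u k‖ * (cD k * ‖u k‖) :=
          (abs_real_inner_le_norm _ _).trans
            (mul_le_mul_of_nonneg_left (hwDb k) (norm_nonneg _))
        have h2 : |⟪wR k, u k⟫| ≤ cR k * ‖u k‖ * ‖u k‖ :=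
          (abs_real_inner_le_norm _ _).trans
            (mul_le_mul_of_nonneg_right (hwRb k) (norm_nonneg _))
        have h3 : |⟪wR k, wD k⟫| ≤ (cR k * ‖u k‖) * (cD k * ‖u k‖) :=
          (abs_real_inner_le_norm _ _).trans
            (mul_le_mul (hwRb k) (hwDb k) (norm_nonneg _)
              (mul_nonneg (hcRnn k) (norm_nonneg _)))
        calc |bR k * ⟪u k, wD k⟫ + bD k * ⟪wR k, u k⟫ + ⟪wR k, wD k⟫|
            ≤ |bR k * ⟪u k, wD k⟫| + |bD k * ⟪wR k, u k⟫| + |⟪wR k, wD k⟫| := by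
              exact (abs_add_le _ _).trans (add_le_add_left (abs_add_le _ _) _)
          _ ≤ |bR k| * (‖u k‖ * (cD k * ‖u k‖)) + |bD k| * (cR k * ‖u k‖ * ‖u k‖)
              + (cR k * ‖u k‖) * (cD k * ‖u k‖) := by
              rw [abs_mul, abs_mul]
              exact add_le_add (add_le_add
                (mul_le_mul_of_nonneg_left h1 (abs_nonneg _))
                (mul_le_mul_of_nonneg_left h2 (abs_nonneg _))) h3
          _ = (|bR k| * cD k + |bD k| * cR k + cR k * cD k) * ‖u k‖ ^ 2 := by ring
      · have : Tendsto (fun k => |bR k| * cD k + |bD k| * cR k + cR k * cD k) atTop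
            (𝓝 (|αR θstar| * 0 + |αD θstar| * 0 + 0 * 0)) :=
          ((hbRlim.abs.mul hcD0).add (hbDlim.abs.mul hcR0)).add (hcR0.mul hcD0)
        simpa using this
    have hbb : Tendsto (fun k => bR k * bD k) atTop (𝓝 (αR θstar * αD θstar)) :=
      hbRlim.mul hbDlim
    have := hz.add hbb
    rw [zero_add] at this
    simpa using this
  -- assemble
  have hne0 : αR θstar * αD θstar ≠ 0 := by positivity
  have hfinal : Tendsto (fun k => g k / (fR k * fD k)) atTop
      (𝓝 (αR θstar * αD θstar / (αR θstar * αD θstar))) :=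
    hg.div (hfR.mul hfD) hne0
  rw [div_self hne0] at hfinal
  refine hfinal.congr fun k => ?_
  have hrk := hr k
  have hr2 : (‖u k‖ : ℝ) ^ 2 ≠ 0 := by positivity
  have hmm : fR k * fD k = (‖pR (θ k)‖ * ‖pD (θ k)‖) / ‖u k‖ ^ 2 := by
    rw [hfRdef, hfDdef]
    simp only
    rw [div_mul_div_comm]
    ring_nf
  rw [hgdef]
  simp only
  rw [hmm, div_div_eq_mul_div, div_mul_eq_mul_div, mul_comm, mul_div_assoc]
  congr 1
  rw [mul_comm]
  exact div_mul_cancel₀ _ hr2
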